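/- Let X = {0^∞} ∪ {(0j)^∞ : j ≥ 1} ∪ {(j0)^∞ : j ≥ 1} be the subshift over the alphabet ℕ determined by the allowed 3-blocks P = {(0,j,0) : j ∈ ℕ} ∪ {(j,0,j) : j ∈ ℕ}, with shift σ. Write A₀ := {0^∞}, B_j := {(0j)^∞}, C_j := {(j0)^∞} (j ≥ 1), U' := {(0j)^∞ : j ≥ 1}, V' := {(j0)^∞ : j ≥ 1}. Let V be the ℤ-span of {χ_{A₀}} ∪ {χ_{B_j}, χ_{C_j} : j ≥ 1} ∪ {χ_{U'}} and W the ℤ-span of {χ_{A₀}} ∪ {χ_{B_j}, χ_{C_j} : j ≥ 1} ∪ {χ_{U'}, χ_{V'}} inside the functions X → ℤ, and define the ℤ-linear map T : V → W by T(f)(y) = f(y) − ∑_{x ∈ X, σ(x) = y} f(x) (each y ∈ X has only finitely many σ-preimages at which f is nonzero, so the sum is finite). Then the kernel of T is the ℤ-span of {χ_{A₀}} ∪ {χ_{B_j} + χ_{C_j} : j ≥ 1}, which is a free ℤ-module isomorphic to ⊕_{j∈ℕ} ℤ, and the cokernel W / T(V) is isomorphic to ⊕_{j∈ℕ} ℤ.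 -/

import Mathlib

namespace SubshiftPaper

variable {A : Type*}

/-- The initial word of length `n` of a sequence. -/
def word (x : ℕ → A) (n : ℕ) : List A := List.ofFn (fun i : Fin n => x i)

/-- Concatenation of a finite word with an infinite sequence. -/
def cat (α : List A) (x : ℕ → A) : ℕ → A := fun n =>
  if h : n < α.length then α.get ⟨n, h⟩ else x (n - α.length)

/-- The shift map on infinite sequences. -/
def shiftSeq (x : ℕ → A) : ℕ → A := fun n => x (n + 1)

/-- `X` is a subshift: the set of sequences avoiding a set `F` of forbidden nonempty
finite words. -/
def IsSubshift (X : Set (ℕ → A)) : Prop :=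
  ∃ F : Set (List A), (∀ w ∈ F, w ≠ []) ∧
    X = {x : ℕ → A | ∀ n k : ℕ, word (fun i => x (n + i)) k ∉ F}

/-- The language of `X`: all finite initial blocks of elements of `X` (and their
subblocks appear by shifting; for subshifts initial blocks suffice). -/
def language (X : Set (ℕ → A)) : Set (List A) :=
  {α | ∃ x ∈ X, word x α.length = α}

open Classical in
/-- The product metric `d(x,y) = 2^{-min{n : xₙ ≠ yₙ}}`. -/
noncomputable def prodDist (x y : ℕ → A) : ℝ :=
  if h : x = y then 0 else (2 : ℝ)⁻¹ ^ Nat.find (Function.ne_iff.mp h)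

/-- The cylinder set `Z_α = {x ∈ X : x starts with α}`. -/
def cylinder (X : Set (ℕ → A)) (α : List A) : Set (ℕ → A) :=
  {x ∈ X | word x α.length = α}

/-- The set `C(α,β) = {βx : βx ∈ X and αx ∈ X}`. -/
def Cab (X : Set (ℕ → A)) (α β : List A) : Set (ℕ → A) :=
  {y | ∃ x : ℕ → A, y = cat β x ∧ cat β x ∈ X ∧ cat α x ∈ X}

/-- The follower set `F_α = {x ∈ X : αx ∈ X}`. -/
def follower (X : Set (ℕ → A)) (α : List A) : Set (ℕ → A) :=
  {x ∈ X | cat α x ∈ X}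

/-- The Boolean algebra `U` of subsets of `X` generated by the sets `C(α,β)`: the smallest
collection of subsets containing all `C(α,β)` and `X` and closed under finite unions, finite
intersections and complements in `X`. -/
def BA (X : Set (ℕ → A)) : Set (Set (ℕ → A)) :=
  ⋂₀ {C : Set (Set (ℕ → A)) | X ∈ C ∧
    (∀ α ∈ language X, ∀ β ∈ language X, Cab X α β ∈ C) ∧
    (∀ S ∈ C, ∀ T ∈ C, S ∪ T ∈ C) ∧
    (∀ S ∈ C, ∀ T ∈ C, S ∩ T ∈ C) ∧
    (∀ S ∈ C, X \ S ∈ C)}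

/-- The periodic sequence `γ^∞ = γγγ⋯`. -/
def per (γ : List A) (h : γ ≠ []) : ℕ → A :=
  fun n => γ.get ⟨n % γ.length, Nat.mod_lt n (List.length_pos_iff.mpr h)⟩

/-- A point is eventually periodic if it has the form `αγ^∞`. -/
def EventuallyPeriodic (x : ℕ → A) : Prop :=
  ∃ (α γ : List A) (h : γ ≠ []), x = cat α (per γ h)

/-- Condition (L): for every finite `P ⊆ L_X` and every nonempty `γ ∈ L_X` with
`γ^∞ ∈ F_P := ⋂_{α ∈ P} F_α`, the set `F_P` contains an element other than `γ^∞`. -/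
def ConditionL (X : Set (ℕ → A)) : Prop :=
  ∀ P : Finset (List A), ↑P ⊆ language X →
    ∀ γ ∈ language X, ∀ h : γ ≠ [],
      per γ h ∈ X ∩ ⋂ α ∈ P, follower X α →
        ∃ z ∈ X ∩ ⋂ α ∈ P, follower X α, z ≠ per γ h


/-- The set `P` of allowed 3-blocks. -/
def allowedP : Set (ℕ × ℕ × ℕ) :=
  {p | ∃ j : ℕ, p = (0, j, 0)} ∪ {p | ∃ j : ℕ, p = (j, 0, j)}

/-- The 2-step subshift over `ℕ` determined by the allowed 3-blocks `P`. -/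
def Xtriple : Set (ℕ → ℕ) :=
  {x | ∀ n : ℕ, (x n, x (n + 1), x (n + 2)) ∈ allowedP}

/-- The periodic sequence `(0j)^∞ = 0,j,0,j,…`. -/
def alt0 (j : ℕ) : ℕ → ℕ := fun n => if n % 2 = 0 then 0 else j

/-- The periodic sequence `(j0)^∞ = j,0,j,0,…`. -/
def alt1 (j : ℕ) : ℕ → ℕ := fun n => if n % 2 = 0 then j else 0

open Classical in
/-- The indicator function `χ_S : X → ℤ` of a subset `S`. -/
noncomputable def ind (X : Set (ℕ → A)) (S : Set (ℕ → A)) : ↥X → ℤ :=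
  fun x => if x.1 ∈ S then 1 else 0

/-- The ℤ-span `V` of `{χ_{A₀}} ∪ {χ_{B_j}, χ_{C_j} : j ≥ 1} ∪ {χ_{U'}}`. -/
noncomputable def Vspan : Submodule ℤ (↥Xtriple → ℤ) :=
  Submodule.span ℤ
    ({ind Xtriple {fun _ => 0}, ind Xtriple {y | ∃ j, 1 ≤ j ∧ y = alt0 j}} ∪
      {f | ∃ j, 1 ≤ j ∧ f = ind Xtriple {alt0 j}} ∪
      {f | ∃ j, 1 ≤ j ∧ f = ind Xtriple {alt1 j}})

/-- The ℤ-span `W` of `{χ_{A₀}} ∪ {χ_{B_j}, χ_{C_j} : j ≥ 1} ∪ {χ_{U'}, χ_{V'}}`. -/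
noncomputable def Wspan : Submodule ℤ (↥Xtriple → ℤ) :=
  Submodule.span ℤ
    ({ind Xtriple {fun _ => 0}, ind Xtriple {y | ∃ j, 1 ≤ j ∧ y = alt0 j},
        ind Xtriple {y | ∃ j, 1 ≤ j ∧ y = alt1 j}} ∪
      {f | ∃ j, 1 ≤ j ∧ f = ind Xtriple {alt0 j}} ∪
      {f | ∃ j, 1 ≤ j ∧ f = ind Xtriple {alt1 j}})

/-! ### Auxiliary infrastructure for `stmt18` -/

section Aux18

lemma alt0_mem (j : ℕ) : alt0 j ∈ Xtriple := by
  intro n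
  rcases Nat.mod_two_eq_zero_or_one n with h | h
  · have h1 : (n + 1) % 2 = 1 := by omega
    have h2 : (n + 2) % 2 = 0 := by omega
    exact Or.inl ⟨j, by simp [alt0, h, h1, h2]⟩
  · have h1 : (n + 1) % 2 = 0 := by omega
    have h2 : (n + 2) % 2 = 1 := by omega
    exact Or.inr ⟨j, by simp [alt0, h, h1, h2]⟩

lemma alt1_mem (j : ℕ) : alt1 j ∈ Xtriple := by
  intro n
  rcases Nat.mod_two_eq_zero_or_one n with h | h
  · have h1 : (n + 1) % 2 = 1 := by omega
    have h2 : (n + 2) % 2 = 0 := by omega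
    exact Or.inr ⟨j, by simp [alt1, h, h1, h2]⟩
  · have h1 : (n + 1) % 2 = 0 := by omega
    have h2 : (n + 2) % 2 = 1 := by omega
    exact Or.inl ⟨j, by simp [alt1, h, h1, h2]⟩

/-- The point `(0j)^∞` of the subshift. -/
def pt0 (j : ℕ) : ↥Xtriple := ⟨alt0 j, alt0_mem j⟩

/-- The point `(j0)^∞` of the subshift. -/
def pt1 (j : ℕ) : ↥Xtriple := ⟨alt1 j, alt1_mem j⟩

lemma pt0_zero_eq_pt1_zero : pt0 0 = pt1 0 := rfl

lemma alt0_apply_zero (j : ℕ) : alt0 j 0 = 0 := rfl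
lemma alt0_apply_one (j : ℕ) : alt0 j 1 = j := rfl
lemma alt1_apply_zero (j : ℕ) : alt1 j 0 = j := rfl
lemma alt1_apply_one (j : ℕ) : alt1 j 1 = 0 := rfl

lemma alt0_injEq {j m : ℕ} (h : alt0 j = alt0 m) : j = m := by
  have := congrFun h 1; simpa [alt0] using this

lemma alt1_injEq {j m : ℕ} (h : alt1 j = alt1 m) : j = m := by
  have := congrFun h 0; simpa [alt1] using this

lemma alt0_ne_alt1 {j m : ℕ} (hm : 1 ≤ m) : alt0 j ≠ alt1 m := by
  intro h
  have := congrFun h 0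
  simp [alt0, alt1] at this
  omega

lemma alt1_ne_alt0 {j m : ℕ} (hm : 1 ≤ m) : alt1 j ≠ alt0 m := by
  intro h
  have := congrFun h 1
  simp [alt0, alt1] at this
  omega

lemma shift_alt0 (j : ℕ) : shiftSeq (alt0 j) = alt1 j := by
  funext n
  rcases Nat.mod_two_eq_zero_or_one n with h | h
  · have h1 : (n + 1) % 2 = 1 := by omega
    simp [shiftSeq, alt0, alt1, h, h1]
  · have h1 : (n + 1) % 2 = 0 := by omega
    simp [shiftSeq, alt0, alt1, h, h1]

lemma shift_alt1 (j : ℕ) : shiftSeq (alt1 j) = alt0 j := by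
  funext n
  rcases Nat.mod_two_eq_zero_or_one n with h | h
  · have h1 : (n + 1) % 2 = 1 := by omega
    simp [shiftSeq, alt0, alt1, h, h1]
  · have h1 : (n + 1) % 2 = 0 := by omega
    simp [shiftSeq, alt0, alt1, h, h1]

/-- The σ-preimage of `(0j)^∞` in `X` is `{(j0)^∞}`. -/
lemma pre0 (j : ℕ) : {x : ↥Xtriple | shiftSeq x.1 = (pt0 j).1} = {pt1 j} := by
  ext x
  simp only [Set.mem_setOf_eq, Set.mem_singleton_iff]
  constructor
  · intro h
    have h1 : x.1 1 = 0 := by simpa [shiftSeq, alt0, pt0] using congrFun h 0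
    have h2 : x.1 2 = j := by simpa [shiftSeq, alt0, pt0] using congrFun h 1
    have h0 : x.1 0 = j := by
      have hx0 := x.2 0
      simp only [Nat.zero_add] at hx0
      rcases hx0 with ⟨m, hm⟩ | ⟨m, hm⟩ <;>
        (simp only [Prod.mk.injEq] at hm; omega)
    apply Subtype.ext; funext n
    cases n with
    | zero => exact h0
    | succ k =>
      have hx := congrFun h k
      have ha := congrFun (shift_alt1 j) k
      simp only [shiftSeq] at hx ha
      rw [hx]
      exact ha.symm
  · rintro rfl
    exact shift_alt1 j

/-- The σ-preimage of `(j0)^∞` in `X` is `{(0j)^∞}`. -/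
lemma pre1 (j : ℕ) : {x : ↥Xtriple | shiftSeq x.1 = (pt1 j).1} = {pt0 j} := by
  ext x
  simp only [Set.mem_setOf_eq, Set.mem_singleton_iff]
  constructor
  · intro h
    have h1 : x.1 1 = j := by simpa [shiftSeq, alt1, pt1] using congrFun h 0
    have h2 : x.1 2 = 0 := by simpa [shiftSeq, alt1, pt1] using congrFun h 1
    have h0 : x.1 0 = 0 := by
      have hx0 := x.2 0
      simp only [Nat.zero_add] at hx0
      rcases hx0 with ⟨m, hm⟩ | ⟨m, hm⟩ <;>
        (simp only [Prod.mk.injEq] at hm; omega)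
    apply Subtype.ext; funext n
    cases n with
    | zero => exact h0
    | succ k =>
      have hx := congrFun h k
      have ha := congrFun (shift_alt0 j) k
      simp only [shiftSeq] at hx ha
      rw [hx]
      exact ha.symm
  · rintro rfl
    exact shift_alt0 j

/-- Every point of the subshift is of the form `(0j)^∞` or `(j0)^∞`. -/
lemma classify (y : ↥Xtriple) : ∃ j, y = pt0 j ∨ y = pt1 j := by
  obtain ⟨x, hx⟩ := y
  have step0 : ∀ n, x n = 0 → x (n + 2) = 0 := by
    intro n h
    rcases hx n with ⟨m, hm⟩ | ⟨m, hm⟩ <;> (simp only [Prod.mk.injEq] at hm; omega)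
  have step1 : ∀ n, x n ≠ 0 → x (n + 1) = 0 ∧ x (n + 2) = x n := by
    intro n h
    rcases hx n with ⟨m, hm⟩ | ⟨m, hm⟩ <;> (simp only [Prod.mk.injEq] at hm; omega)
  by_cases h0 : x 0 = 0
  · refine ⟨x 1, Or.inl ?_⟩
    apply Subtype.ext
    funext n
    show x n = alt0 (x 1) n
    induction n using Nat.strong_induction_on with
    | _ n ih =>
      match n with
      | 0 => simpa [alt0] using h0
      | 1 => simp [alt0]
      | (k + 2) =>
        have hk := ih k (by omega)
        have hmod : (k + 2) % 2 = k % 2 := by omega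
        rcases Nat.mod_two_eq_zero_or_one k with h | h
        · have hxk : x k = 0 := by rw [hk]; simp [alt0, h]
          have h2 : x (k + 2) = 0 := step0 k hxk
          simp [alt0, hmod, h, h2]
        · by_cases h1 : x 1 = 0
          · have hxk : x k = 0 := by rw [hk]; simp [alt0, h, h1]
            have h2 : x (k + 2) = 0 := step0 k hxk
            simp [alt0, hmod, h, h2, h1]
          · have hxk : x k = x 1 := by rw [hk]; simp [alt0, h]
            have h2 : x (k + 2) = x 1 := by
              rw [(step1 k (by rw [hxk]; exact h1)).2, hxk]
            simp [alt0, hmod, h, h2]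
  · refine ⟨x 0, Or.inr ?_⟩
    apply Subtype.ext
    funext n
    show x n = alt1 (x 0) n
    induction n using Nat.strong_induction_on with
    | _ n ih =>
      match n with
      | 0 => simp [alt1]
      | 1 => simpa [alt1] using (step1 0 h0).1
      | (k + 2) =>
        have hk := ih k (by omega)
        have hmod : (k + 2) % 2 = k % 2 := by omega
        rcases Nat.mod_two_eq_zero_or_one k with h | h
        · have hxk : x k = x 0 := by rw [hk]; simp [alt1, h]
          have h2 : x (k + 2) = x 0 := by
            rw [(step1 k (by rw [hxk]; exact h0)).2, hxk]
          simp [alt1, hmod, h, h2]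
        · have hxk : x k = 0 := by rw [hk]; simp [alt1, h]
          have h2 : x (k + 2) = 0 := step0 k hxk
          simp [alt1, hmod, h, h2]

lemma ind_of_mem {S : Set (ℕ → ℕ)} {y : ↥Xtriple} (h : y.1 ∈ S) :
    ind Xtriple S y = 1 := by simp [ind, h]

lemma ind_of_not_mem {S : Set (ℕ → ℕ)} {y : ↥Xtriple} (h : y.1 ∉ S) :
    ind Xtriple S y = 0 := by simp [ind, h]

lemma alt0_zero_eq : alt0 0 = (fun _ => 0 : ℕ → ℕ) := by
  funext n; simp [alt0]

lemma vA0 (j : ℕ) : ind Xtriple {fun _ => 0} (pt0 j) = if j = 0 then 1 else 0 := by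
  rcases Nat.eq_zero_or_pos j with rfl | hj
  · rw [if_pos rfl]; exact ind_of_mem (by simp [pt0, alt0_zero_eq])
  · rw [if_neg (by omega)]
    refine ind_of_not_mem ?_
    simp only [pt0, Set.mem_singleton_iff]
    intro h
    have h1 : j = 0 := congrFun h 1
    omega

lemma vA1 (j : ℕ) : ind Xtriple {fun _ => 0} (pt1 j) = if j = 0 then 1 else 0 := by
  rcases Nat.eq_zero_or_pos j with rfl | hj
  · rw [if_pos rfl]; exact ind_of_mem (by simp [pt1, ← alt0_zero_eq]; rfl)
  · rw [if_neg (by omega)]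
    refine ind_of_not_mem ?_
    simp only [pt1, Set.mem_singleton_iff]
    intro h
    have h1 : j = 0 := congrFun h 0
    omega

lemma vU0 (j : ℕ) :
    ind Xtriple {y | ∃ m, 1 ≤ m ∧ y = alt0 m} (pt0 j) = if 1 ≤ j then 1 else 0 := by
  rcases Nat.eq_zero_or_pos j with rfl | hj
  · rw [if_neg (by omega)]
    refine ind_of_not_mem ?_
    rintro ⟨m, hm, h⟩
    have := alt0_injEq h
    omega
  · have hj' : 1 ≤ j := hj
    rw [if_pos hj']; exact ind_of_mem ⟨j, hj', rfl⟩

lemma vU1 (j : ℕ) :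
    ind Xtriple {y | ∃ m, 1 ≤ m ∧ y = alt0 m} (pt1 j) = 0 := by
  refine ind_of_not_mem ?_
  rintro ⟨m, hm, h⟩
  exact alt1_ne_alt0 hm h

lemma vV0 (j : ℕ) :
    ind Xtriple {y | ∃ m, 1 ≤ m ∧ y = alt1 m} (pt0 j) = 0 := by
  refine ind_of_not_mem ?_
  rintro ⟨m, hm, h⟩
  exact alt0_ne_alt1 hm h

lemma vV1 (j : ℕ) :
    ind Xtriple {y | ∃ m, 1 ≤ m ∧ y = alt1 m} (pt1 j) = if 1 ≤ j then 1 else 0 := by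
  rcases Nat.eq_zero_or_pos j with rfl | hj
  · rw [if_neg (by omega)]
    refine ind_of_not_mem ?_
    rintro ⟨m, hm, h⟩
    have := alt1_injEq h
    omega
  · have hj' : 1 ≤ j := hj
    rw [if_pos hj']; exact ind_of_mem ⟨j, hj', rfl⟩

lemma vB0 (m j : ℕ) : ind Xtriple {alt0 m} (pt0 j) = if j = m then 1 else 0 := by
  by_cases h : j = m
  · subst h; rw [if_pos rfl]; exact ind_of_mem rfl
  · rw [if_neg h]
    exact ind_of_not_mem (fun hh => h (alt0_injEq hh))

lemma vB1 (m j : ℕ) (hm : 1 ≤ m) : ind Xtriple {alt0 m} (pt1 j) = 0 :=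
  ind_of_not_mem (alt1_ne_alt0 hm)

lemma vC0 (m j : ℕ) (hm : 1 ≤ m) : ind Xtriple {alt1 m} (pt0 j) = 0 :=
  ind_of_not_mem (alt0_ne_alt1 hm)

lemma vC1 (m j : ℕ) : ind Xtriple {alt1 m} (pt1 j) = if j = m then 1 else 0 := by
  by_cases h : j = m
  · subst h; rw [if_pos rfl]; exact ind_of_mem rfl
  · rw [if_neg h]
    exact ind_of_not_mem (fun hh => h (alt1_injEq hh))

/-- The generators of the kernel: `χ_{A₀}` and `χ_{B_j} + χ_{C_j}` for `j ≥ 1`. -/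
noncomputable def kgen : ℕ → (↥Xtriple → ℤ)
  | 0 => ind Xtriple {fun _ => 0}
  | (k + 1) => ind Xtriple {alt0 (k + 1)} + ind Xtriple {alt1 (k + 1)}

lemma kgen_range :
    Set.range kgen = ({ind Xtriple {fun _ => 0}} ∪
      {g | ∃ j, 1 ≤ j ∧ g = ind Xtriple {alt0 j} + ind Xtriple {alt1 j}}) := by
  ext g
  constructor
  · rintro ⟨i, rfl⟩
    match i with
    | 0 => exact Or.inl rfl
    | (k + 1) => exact Or.inr ⟨k + 1, by omega, rfl⟩
  · rintro (h | ⟨j, hj, rfl⟩)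
    · exact ⟨0, h.symm⟩
    · obtain ⟨k, rfl⟩ := Nat.exists_eq_add_of_lt (show 0 < j from hj)
      exact ⟨k + 1, by simp [kgen]⟩

lemma kgen_pt0 (i j : ℕ) (hj : 1 ≤ j) : kgen i (pt0 j) = if i = j then 1 else 0 := by
  match i with
  | 0 =>
    have h1 : ¬ j = 0 := by omega
    have h2 : ¬ (0 : ℕ) = j := by omega
    simp only [kgen, vA0 j, h1, h2, if_false]
  | (k + 1) =>
    simp only [kgen, Pi.add_apply, vB0 (k + 1) j, vC0 (k + 1) j (by omega), add_zero]
    by_cases h : j = k + 1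
    · simp [h]
    · rw [if_neg h, if_neg (fun hh => h hh.symm)]

lemma kgen_pt1 (i j : ℕ) (hj : 1 ≤ j) : kgen i (pt1 j) = if i = j then 1 else 0 := by
  match i with
  | 0 =>
    have h1 : ¬ j = 0 := by omega
    have h2 : ¬ (0 : ℕ) = j := by omega
    simp only [kgen, vA1 j, h1, h2, if_false]
  | (k + 1) =>
    simp only [kgen, Pi.add_apply, vC1 (k + 1) j, vB1 (k + 1) j (by omega), zero_add]
    by_cases h : j = k + 1
    · simp [h]
    · rw [if_neg h, if_neg (fun hh => h hh.symm)]

lemma kgen_x0 (i : ℕ) : kgen i (pt0 0) = if i = 0 then 1 else 0 := by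
  match i with
  | 0 => simp [kgen, vA0 0]
  | (k + 1) =>
    have h1 : ¬ (0 : ℕ) = k + 1 := by omega
    simp [kgen, vB0 (k + 1) 0, vC0 (k + 1) 0 (by omega), h1]

/-- The generators of `W` modulo the image: `χ_{A₀}`, `χ_{U'}`, `χ_{B_j}`. -/
noncomputable def wgen : ℕ → (↥Xtriple → ℤ)
  | 0 => ind Xtriple {fun _ => 0}
  | 1 => ind Xtriple {y | ∃ m, 1 ≤ m ∧ y = alt0 m}
  | (k + 2) => ind Xtriple {alt0 (k + 1)}

lemma wgen_x0 (i : ℕ) : wgen i (pt0 0) = if i = 0 then 1 else 0 := by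
  match i with
  | 0 => simp [wgen, vA0 0]
  | 1 => simp [wgen, vU0 0]
  | (k + 2) =>
    have h1 : ¬ (0 : ℕ) = k + 1 := by omega
    simp [wgen, vB0 (k + 1) 0, h1]

lemma wgen_sum (i j : ℕ) (hj : 1 ≤ j) :
    wgen i (pt0 j) + wgen i (pt1 j) =
      (if i = 1 then 1 else 0) + (if i = j + 1 then 1 else 0) := by
  match i with
  | 0 =>
    have h1 : ¬ j = 0 := by omega
    have h2 : ¬ (0 : ℕ) = j + 1 := by omega
    simp [wgen, vA0 j, vA1 j, h1, h2]
  | 1 =>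
    have h2 : ¬ (1 : ℕ) = j + 1 := by omega
    simp [wgen, vU0 j, vU1 j, hj, h2]
    omega
  | (k + 2) =>
    have h2 : ¬ (k + 2 : ℕ) = 1 := by omega
    rw [wgen, vB0 (k + 1) j, vB1 (k + 1) j (by omega), if_neg h2]
    by_cases h : j = k + 1
    · subst h
      simp
    · have h3 : ¬ (k + 2 : ℕ) = j + 1 := by omega
      simp [h, h3]

/-- Sum of a `Finsupp` against a delta function. -/
lemma sum_delta (c : ℕ →₀ ℤ) (j : ℕ) :
    (c.sum fun i a => a * (if i = j then 1 else 0)) = c j := by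
  simp only [mul_ite, mul_one, mul_zero]
  rw [Finsupp.sum_ite_eq' c j (fun _ a => a)]
  by_cases h : j ∈ c.support
  · rw [if_pos h]
  · rw [if_neg h, (Finsupp.notMem_support_iff.mp h)]

/-- Evaluating a linear combination through a coordinate functional. -/
lemma lc_eval {M : Type*} [AddCommGroup M] [Module ℤ M] (g : ℕ → M)
    (φ : M →ₗ[ℤ] ℤ) (c : ℕ →₀ ℤ) (j : ℕ)
    (hg : ∀ i, φ (g i) = if i = j then 1 else 0) :
    φ (Finsupp.linearCombination ℤ g c) = c j := by
  rw [Finsupp.linearCombination_apply, map_finsuppSum]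
  simp only [map_smul, smul_eq_mul, hg]
  exact sum_delta c j

lemma lc_eval2 {M : Type*} [AddCommGroup M] [Module ℤ M] (g : ℕ → M)
    (φ : M →ₗ[ℤ] ℤ) (c : ℕ →₀ ℤ) (j₁ j₂ : ℕ)
    (hg : ∀ i, φ (g i) = (if i = j₁ then 1 else 0) + (if i = j₂ then 1 else 0)) :
    φ (Finsupp.linearCombination ℤ g c) = c j₁ + c j₂ := by
  rw [Finsupp.linearCombination_apply, map_finsuppSum]
  simp only [map_smul, smul_eq_mul, hg]
  rw [show (fun (i : ℕ) (a : ℤ) => a * ((if i = j₁ then (1:ℤ) else 0) + (if i = j₂ then 1 else 0)))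
      = fun i a => a * (if i = j₁ then 1 else 0) + a * (if i = j₂ then 1 else 0) from
    funext fun i => funext fun a => by ring]
  rw [Finsupp.sum_add, sum_delta, sum_delta]

/-- Evaluation at a point as a linear functional. -/
noncomputable def evX (y : ↥Xtriple) : (↥Xtriple → ℤ) →ₗ[ℤ] ℤ := LinearMap.proj y

lemma evX_apply (y : ↥Xtriple) (f : ↥Xtriple → ℤ) : evX y f = f y := rfl

/-- The span of the kernel generators. -/
noncomputable def Kspan : Submodule ℤ (↥Xtriple → ℤ) :=
  Submodule.span ℤ
    ({ind Xtriple {fun _ => 0}} ∪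
      {g | ∃ j, 1 ≤ j ∧ g = ind Xtriple {alt0 j} + ind Xtriple {alt1 j}})

lemma memA_V : ind Xtriple {fun _ => 0} ∈ Vspan :=
  Submodule.subset_span (by left; left; exact Set.mem_insert _ _)

lemma memU_V : ind Xtriple {y | ∃ j, 1 ≤ j ∧ y = alt0 j} ∈ Vspan :=
  Submodule.subset_span (by left; left; exact Set.mem_insert_iff.mpr (Or.inr rfl))

lemma memB_V (m : ℕ) (hm : 1 ≤ m) : ind Xtriple {alt0 m} ∈ Vspan :=
  Submodule.subset_span (by left; right; exact ⟨m, hm, rfl⟩)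

lemma memC_V (m : ℕ) (hm : 1 ≤ m) : ind Xtriple {alt1 m} ∈ Vspan :=
  Submodule.subset_span (by right; exact ⟨m, hm, rfl⟩)

lemma memA_W : ind Xtriple {fun _ => 0} ∈ Wspan :=
  Submodule.subset_span (by left; left; exact Set.mem_insert _ _)

lemma memU_W : ind Xtriple {y | ∃ j, 1 ≤ j ∧ y = alt0 j} ∈ Wspan :=
  Submodule.subset_span
    (by left; left; exact Set.mem_insert_iff.mpr (Or.inr (Set.mem_insert _ _)))

lemma memV_W : ind Xtriple {y | ∃ j, 1 ≤ j ∧ y = alt1 j} ∈ Wspan :=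
  Submodule.subset_span
    (by left; left
        exact Set.mem_insert_iff.mpr (Or.inr (Set.mem_insert_iff.mpr (Or.inr rfl))))

lemma memB_W (m : ℕ) (hm : 1 ≤ m) : ind Xtriple {alt0 m} ∈ Wspan :=
  Submodule.subset_span (by left; right; exact ⟨m, hm, rfl⟩)

lemma memC_W (m : ℕ) (hm : 1 ≤ m) : ind Xtriple {alt1 m} ∈ Wspan :=
  Submodule.subset_span (by right; exact ⟨m, hm, rfl⟩)

lemma kgen_mem_V (i : ℕ) : kgen i ∈ Vspan := by
  match i with
  | 0 => exact memA_V
  | (k + 1) => exact add_mem (memB_V (k + 1) (by omega)) (memC_V (k + 1) (by omega))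

lemma kgen_mem_K (i : ℕ) : kgen i ∈ Kspan := by
  match i with
  | 0 => exact Submodule.subset_span (Or.inl rfl)
  | (k + 1) => exact Submodule.subset_span (Or.inr ⟨k + 1, by omega, rfl⟩)

lemma wgen_mem_W (i : ℕ) : wgen i ∈ Wspan := by
  match i with
  | 0 => exact memA_W
  | 1 => exact memU_W
  | (k + 2) => exact memB_W (k + 1) (by omega)

/-- Every element of `Kspan` takes equal values at `(0j)^∞` and `(j0)^∞`. -/
lemma Kspan_balanced : ∀ g ∈ Kspan, ∀ j : ℕ, g (pt0 j) = g (pt1 j) := by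
  intro g hg
  refine Submodule.span_induction
    (p := fun g _ => ∀ j : ℕ, g (pt0 j) = g (pt1 j)) ?_ ?_ ?_ ?_ hg
  · intro x hx j
    rcases Nat.eq_zero_or_pos j with rfl | hj
    · rw [pt0_zero_eq_pt1_zero]
    · rcases hx with rfl | ⟨m, hm, rfl⟩
      · rw [vA0, vA1]
      · simp only [Pi.add_apply]
        rw [vB0, vC0 m j hm, vB1 m j hm, vC1]
        ring
  · intro j; rfl
  · intro a b _ _ ha hb j
    simp only [Pi.add_apply, ha j, hb j]
  · intro r a _ ha j
    simp only [Pi.smul_apply, ha j]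

/-- Elements of `Vspan` have finitely many `j ≥ 1` with nonzero value at `(j0)^∞`. -/
lemma Vspan_finite_support : ∀ g ∈ Vspan, {j : ℕ | 1 ≤ j ∧ g (pt1 j) ≠ 0}.Finite := by
  intro g hg
  refine Submodule.span_induction
    (p := fun g _ => {j : ℕ | 1 ≤ j ∧ g (pt1 j) ≠ 0}.Finite) ?_ ?_ ?_ ?_ hg
  · intro x hx
    simp only [Set.mem_union, Set.mem_insert_iff, Set.mem_singleton_iff,
      Set.mem_setOf_eq] at hx
    rcases hx with ((rfl | rfl) | ⟨m, hm, rfl⟩) | ⟨m, hm, rfl⟩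
    · refine Set.Finite.subset Set.finite_empty ?_
      rintro j ⟨hj, hne⟩
      exact absurd (by rw [vA1 j, if_neg (by omega)]) hne
    · refine Set.Finite.subset Set.finite_empty ?_
      rintro j ⟨hj, hne⟩
      exact absurd (vU1 j) hne
    · refine Set.Finite.subset Set.finite_empty ?_
      rintro j ⟨hj, hne⟩
      exact absurd (vB1 m j hm) hne
    · refine Set.Finite.subset (Set.finite_singleton m) ?_
      rintro j ⟨hj, hne⟩
      by_contra h
      exact hne (by rw [vC1 m j, if_neg (fun hjm => h (by rw [hjm]; rfl))])
  · refine Set.Finite.subset Set.finite_empty ?_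
    rintro j ⟨hj, hne⟩
    exact hne rfl
  · intro a b _ _ ha hb
    refine Set.Finite.subset (ha.union hb) ?_
    rintro j ⟨hj, hne⟩
    by_cases hja : a (pt1 j) = 0
    · refine Or.inr ⟨hj, fun hb0 => hne ?_⟩
      simp [hja, hb0]
    · exact Or.inl ⟨hj, hja⟩
  · intro r a _ ha
    refine Set.Finite.subset ha ?_
    rintro j ⟨hj, hne⟩
    refine ⟨hj, fun h0 => hne ?_⟩
    simp [h0]

/-- A balanced element of `Vspan` lies in `Kspan`. -/
lemma mem_Kspan_of_balanced (f : ↥Xtriple → ℤ) (hf : f ∈ Vspan)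
    (h : ∀ j : ℕ, f (pt0 j) = f (pt1 j)) : f ∈ Kspan := by
  classical
  set F : Finset ℕ := (Vspan_finite_support f hf).toFinset with hF
  have hmemF : ∀ j, j ∈ F ↔ 1 ≤ j ∧ f (pt1 j) ≠ 0 := by
    intro j
    rw [hF, Set.Finite.mem_toFinset]
    rfl
  have key : f = (f (pt0 0)) • kgen 0 + ∑ m ∈ F, (f (pt1 m)) • kgen m := by
    funext y
    obtain ⟨j, rfl | rfl⟩ := classify y
    · simp only [Pi.add_apply, Pi.smul_apply, Finset.sum_apply, smul_eq_mul]
      rcases Nat.eq_zero_or_pos j with rfl | hj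
      · rw [kgen_x0 0, if_pos rfl]
        have hsum : ∑ m ∈ F, f (pt1 m) * kgen m (pt0 0) = 0 := by
          refine Finset.sum_eq_zero fun m hm => ?_
          have h1 : 1 ≤ m := ((hmemF m).mp hm).1
          rw [kgen_x0 m, if_neg (by omega), mul_zero]
        rw [hsum]
        ring
      · have h0 : kgen 0 (pt0 j) = 0 := by
          rw [kgen_pt0 0 j hj, if_neg (by omega)]
        rw [h0, mul_zero, zero_add]
        have hsum : ∑ m ∈ F, f (pt1 m) * kgen m (pt0 j)
            = ∑ m ∈ F, if m = j then f (pt1 m) else 0 := by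
          refine Finset.sum_congr rfl fun m _ => ?_
          rw [kgen_pt0 m j hj, mul_ite, mul_one, mul_zero]
        rw [hsum, Finset.sum_ite_eq' F j (fun m => f (pt1 m))]
        by_cases hjF : j ∈ F
        · rw [if_pos hjF, h j]
        · rw [if_neg hjF, h j]
          by_contra hne
          exact hjF ((hmemF j).mpr ⟨hj, hne⟩)
    · simp only [Pi.add_apply, Pi.smul_apply, Finset.sum_apply, smul_eq_mul]
      rcases Nat.eq_zero_or_pos j with rfl | hj
      · rw [← pt0_zero_eq_pt1_zero, kgen_x0 0, if_pos rfl]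
        have hsum : ∑ m ∈ F, f (pt1 m) * kgen m (pt0 0) = 0 := by
          refine Finset.sum_eq_zero fun m hm => ?_
          have h1 : 1 ≤ m := ((hmemF m).mp hm).1
          rw [kgen_x0 m, if_neg (by omega), mul_zero]
        rw [hsum]
        ring
      · have h0 : kgen 0 (pt1 j) = 0 := by
          rw [kgen_pt1 0 j hj, if_neg (by omega)]
        rw [h0, mul_zero, zero_add]
        have hsum : ∑ m ∈ F, f (pt1 m) * kgen m (pt1 j)
            = ∑ m ∈ F, if m = j then f (pt1 m) else 0 := by
          refine Finset.sum_congr rfl fun m _ => ?_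
          rw [kgen_pt1 m j hj, mul_ite, mul_one, mul_zero]
        rw [hsum, Finset.sum_ite_eq' F j (fun m => f (pt1 m))]
        by_cases hjF : j ∈ F
        · rw [if_pos hjF]
        · rw [if_neg hjF]
          by_contra hne
          exact hjF ((hmemF j).mpr ⟨hj, hne⟩)
  rw [key]
  exact add_mem (Submodule.smul_mem _ _ (kgen_mem_K 0))
    (Submodule.sum_mem _ fun m _ => Submodule.smul_mem _ _ (kgen_mem_K m))

end Aux18

/-- for the 2-step subshift `X` above and the map `T : V → W`,
`T(f)(y) = f(y) − ∑_{σ(x) = y} f(x)`, the kernel of `T` is the ℤ-span of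
`{χ_{A₀}} ∪ {χ_{B_j} + χ_{C_j} : j ≥ 1}`, which is isomorphic to `⊕_{j∈ℕ} ℤ`, and the
cokernel `W / T(V)` is isomorphic to `⊕_{j∈ℕ} ℤ`. -/
theorem stmt18 (T : Vspan →ₗ[ℤ] Wspan)
    (hT : ∀ (f : Vspan) (y : ↥Xtriple),
      (T f : ↥Xtriple → ℤ) y =
        (f : ↥Xtriple → ℤ) y -
          ∑ᶠ x ∈ {x : ↥Xtriple | shiftSeq x.1 = y.1}, (f : ↥Xtriple → ℤ) x) :
    (∀ f : Vspan, T f = 0 ↔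
      (f : ↥Xtriple → ℤ) ∈ Submodule.span ℤ
        ({ind Xtriple {fun _ => 0}} ∪
          {g | ∃ j, 1 ≤ j ∧ g = ind Xtriple {alt0 j} + ind Xtriple {alt1 j}})) ∧
    Nonempty (LinearMap.ker T ≃ₗ[ℤ] (ℕ →₀ ℤ)) ∧
    Nonempty ((↥Wspan ⧸ LinearMap.range T) ≃ₗ[ℤ] (ℕ →₀ ℤ)) := by
  classical
  -- T evaluated at the two families of points
  have hT0 : ∀ (f : Vspan) (j : ℕ), (T f : ↥Xtriple → ℤ) (pt0 j)
      = (f : ↥Xtriple → ℤ) (pt0 j) - (f : ↥Xtriple → ℤ) (pt1 j) := by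
    intro f j
    rw [hT f (pt0 j), pre0 j, finsum_mem_singleton]
  have hT1 : ∀ (f : Vspan) (j : ℕ), (T f : ↥Xtriple → ℤ) (pt1 j)
      = (f : ↥Xtriple → ℤ) (pt1 j) - (f : ↥Xtriple → ℤ) (pt0 j) := by
    intro f j
    rw [hT f (pt1 j), pre1 j, finsum_mem_singleton]
  -- T f = 0 iff f is balanced
  have hTz : ∀ f : Vspan, T f = 0 ↔
      ∀ j : ℕ, (f : ↥Xtriple → ℤ) (pt0 j) = (f : ↥Xtriple → ℤ) (pt1 j) := by
    intro f
    constructor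
    · intro h j
      have h0 := hT0 f j
      rw [h] at h0
      simp only [ZeroMemClass.coe_zero, Pi.zero_apply] at h0
      linarith [h0]
    · intro h
      apply Subtype.val_injective
      funext y
      obtain ⟨j, rfl | rfl⟩ := classify y
      · rw [hT0 f j, h j]
        simp
      · rw [hT1 f j, h j]
        simp
  -- Part 1
  have part1 : ∀ f : Vspan, T f = 0 ↔ (f : ↥Xtriple → ℤ) ∈ Kspan := by
    intro f
    rw [hTz f]
    constructor
    · intro h
      exact mem_Kspan_of_balanced _ f.2 h
    · intro h
      exact Kspan_balanced _ h
  -- the kernel generators as elements of ker T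
  have kgen_ker : ∀ i : ℕ, (⟨kgen i, kgen_mem_V i⟩ : Vspan) ∈ LinearMap.ker T := by
    intro i
    rw [LinearMap.mem_ker]
    exact (part1 _).mpr (kgen_mem_K i)
  set gker : ℕ → ↥(LinearMap.ker T) :=
    fun i => ⟨⟨kgen i, kgen_mem_V i⟩, kgen_ker i⟩ with hgker
  set ψ : (ℕ →₀ ℤ) →ₗ[ℤ] ↥(LinearMap.ker T) :=
    Finsupp.linearCombination ℤ gker with hψ
  set Jmap : ↥(LinearMap.ker T) →ₗ[ℤ] (↥Xtriple → ℤ) :=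
    Vspan.subtype.comp (LinearMap.ker T).subtype with hJmap
  have hψinj : Function.Injective ψ := by
    rw [← LinearMap.ker_eq_bot]
    rw [LinearMap.ker_eq_bot']
    intro c hc
    have hc0 : c 0 = 0 := by
      have h1 := lc_eval gker ((evX (pt0 0)).comp Jmap) c 0
        (fun i => kgen_x0 i)
      rw [show Finsupp.linearCombination ℤ gker c = ψ c from rfl, hc, map_zero] at h1
      exact h1.symm
    have hcj : ∀ j : ℕ, 1 ≤ j → c j = 0 := by
      intro j hj
      have h1 := lc_eval gker ((evX (pt1 j)).comp Jmap) c j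
        (fun i => kgen_pt1 i j hj)
      rw [show Finsupp.linearCombination ℤ gker c = ψ c from rfl, hc, map_zero] at h1
      exact h1.symm
    ext i
    match i with
    | 0 => exact hc0
    | (k + 1) => exact hcj (k + 1) (by omega)
  have hψsurj : Function.Surjective ψ := by
    intro f
    have hfK : (f : Vspan).1 ∈ Submodule.span ℤ (Set.range kgen) := by
      rw [kgen_range]
      exact (part1 f.1).mp (LinearMap.mem_ker.mp f.2)
    obtain ⟨c, hc⟩ := Finsupp.mem_span_range_iff_exists_finsupp.mp hfK
    refine ⟨c, ?_⟩
    apply Subtype.coe_injective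
    apply Subtype.coe_injective
    show Jmap (ψ c) = (f : Vspan).1
    rw [hψ, Finsupp.apply_linearCombination]
    have hcomp : (⇑Jmap ∘ gker) = kgen := funext fun i => rfl
    rw [hcomp, Finsupp.linearCombination_apply]
    exact hc
  refine ⟨fun f => part1 f, ⟨(LinearEquiv.ofBijective ψ ⟨hψinj, hψsurj⟩).symm⟩, ?_⟩
  -- Part 3 : the cokernel
  set gw : ℕ → ↥Wspan := fun i => ⟨wgen i, wgen_mem_W i⟩ with hgw
  set ρ : (ℕ →₀ ℤ) →ₗ[ℤ] (↥Wspan ⧸ LinearMap.range T) :=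
    (LinearMap.range T).mkQ.comp (Finsupp.linearCombination ℤ gw) with hρ
  -- two image computations
  have hTU : T ⟨ind Xtriple {y | ∃ j, 1 ≤ j ∧ y = alt0 j}, memU_V⟩
      = ⟨ind Xtriple {y | ∃ j, 1 ≤ j ∧ y = alt0 j}
          - ind Xtriple {y | ∃ j, 1 ≤ j ∧ y = alt1 j}, sub_mem memU_W memV_W⟩ := by
    apply Subtype.val_injective
    funext y
    obtain ⟨j, rfl | rfl⟩ := classify y
    · rw [hT0]
      show ind Xtriple {y | ∃ j, 1 ≤ j ∧ y = alt0 j} (pt0 j)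
          - ind Xtriple {y | ∃ j, 1 ≤ j ∧ y = alt0 j} (pt1 j)
        = (ind Xtriple {y | ∃ j, 1 ≤ j ∧ y = alt0 j}
            - ind Xtriple {y | ∃ j, 1 ≤ j ∧ y = alt1 j}) (pt0 j)
      rw [Pi.sub_apply, vU1, vV0]
    · rw [hT1]
      show ind Xtriple {y | ∃ j, 1 ≤ j ∧ y = alt0 j} (pt1 j)
          - ind Xtriple {y | ∃ j, 1 ≤ j ∧ y = alt0 j} (pt0 j)
        = (ind Xtriple {y | ∃ j, 1 ≤ j ∧ y = alt0 j}
            - ind Xtriple {y | ∃ j, 1 ≤ j ∧ y = alt1 j}) (pt1 j)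
      rw [Pi.sub_apply, vU1, vU0, vV1]
  have hTB : ∀ (m : ℕ) (hm : 1 ≤ m), T ⟨ind Xtriple {alt0 m}, memB_V m hm⟩
      = ⟨ind Xtriple {alt0 m} - ind Xtriple {alt1 m},
          sub_mem (memB_W m hm) (memC_W m hm)⟩ := by
    intro m hm
    apply Subtype.val_injective
    funext y
    obtain ⟨j, rfl | rfl⟩ := classify y
    · rw [hT0]
      show ind Xtriple {alt0 m} (pt0 j) - ind Xtriple {alt0 m} (pt1 j)
        = (ind Xtriple {alt0 m} - ind Xtriple {alt1 m}) (pt0 j)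
      rw [Pi.sub_apply, vB1 m j hm, vC0 m j hm]
    · rw [hT1]
      show ind Xtriple {alt0 m} (pt1 j) - ind Xtriple {alt0 m} (pt0 j)
        = (ind Xtriple {alt0 m} - ind Xtriple {alt1 m}) (pt1 j)
      rw [Pi.sub_apply, vB1 m j hm, vB0, vC1]
  have hρinj : Function.Injective ρ := by
    rw [← LinearMap.ker_eq_bot, LinearMap.ker_eq_bot']
    intro c hc
    have hmem : Finsupp.linearCombination ℤ gw c ∈ LinearMap.range T := by
      rw [hρ, LinearMap.comp_apply, Submodule.mkQ_apply,
        Submodule.Quotient.mk_eq_zero] at hc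
      exact hc
    obtain ⟨f, hf⟩ := hmem
    have hc0 : c 0 = 0 := by
      have h1 := lc_eval gw ((evX (pt0 0)).comp Wspan.subtype) c 0
        (fun i => wgen_x0 i)
      rw [← hf] at h1
      have h2 : ((evX (pt0 0)).comp Wspan.subtype) (T f) = 0 := by
        show (T f : ↥Xtriple → ℤ) (pt0 0) = 0
        rw [hT0 f 0, ← pt0_zero_eq_pt1_zero, sub_self]
      rw [h2] at h1
      exact h1.symm
    have hc1j : ∀ j : ℕ, 1 ≤ j → c 1 + c (j + 1) = 0 := by
      intro j hj
      have h1 := lc_eval2 gw (((evX (pt0 j)).comp Wspan.subtype)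
          + ((evX (pt1 j)).comp Wspan.subtype)) c 1 (j + 1)
        (fun i => by
          simp only [LinearMap.add_apply, LinearMap.comp_apply]
          exact wgen_sum i j hj)
      rw [← hf] at h1
      have h2 : (((evX (pt0 j)).comp Wspan.subtype)
          + ((evX (pt1 j)).comp Wspan.subtype)) (T f) = 0 := by
        simp only [LinearMap.add_apply, LinearMap.comp_apply]
        show (T f : ↥Xtriple → ℤ) (pt0 j) + (T f : ↥Xtriple → ℤ) (pt1 j) = 0
        rw [hT0 f j, hT1 f j]
        ring
      rw [h2] at h1
      exact h1.symm
    have hc1 : c 1 = 0 := by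
      have hNs : c (c.support.sup id + 1 + 1) = 0 := by
        by_contra h
        have hmem2 : c.support.sup id + 1 + 1 ∈ c.support := Finsupp.mem_support_iff.mpr h
        have := Finset.le_sup (f := id) hmem2
        simp only [id_eq] at this
        omega
      have := hc1j (c.support.sup id + 1) (by omega)
      omega
    ext i
    match i with
    | 0 => exact hc0
    | 1 => exact hc1
    | (k + 2) =>
      have h2 : c 1 + c (k + 2) = 0 := hc1j (k + 1) (by omega)
      show c (k + 2) = (0 : ℤ)
      omega
  have hρsurj : Function.Surjective ρ := by
    have main : ∀ (x : ↥Xtriple → ℤ), x ∈ Wspan →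
        ∀ hx : x ∈ Wspan, (LinearMap.range T).mkQ ⟨x, hx⟩ ∈ LinearMap.range ρ := by
      intro x hx
      refine Submodule.span_induction
        (p := fun x _ => ∀ hx : x ∈ Wspan,
          (LinearMap.range T).mkQ ⟨x, hx⟩ ∈ LinearMap.range ρ) ?_ ?_ ?_ ?_ hx
      · intro x hmem hxW
        simp only [Set.mem_union, Set.mem_insert_iff, Set.mem_singleton_iff,
          Set.mem_setOf_eq] at hmem
        rcases hmem with ((rfl | rfl | rfl) | ⟨m, hm, rfl⟩) | ⟨m, hm, rfl⟩
        · refine ⟨Finsupp.single 0 1, ?_⟩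
          rw [hρ, LinearMap.comp_apply, Finsupp.linearCombination_single, one_smul]
          rfl
        · refine ⟨Finsupp.single 1 1, ?_⟩
          rw [hρ, LinearMap.comp_apply, Finsupp.linearCombination_single, one_smul]
          rfl
        · refine ⟨Finsupp.single 1 1, ?_⟩
          rw [hρ, LinearMap.comp_apply, Finsupp.linearCombination_single, one_smul,
            Submodule.mkQ_apply, Submodule.mkQ_apply, Submodule.Quotient.eq]
          refine ⟨⟨ind Xtriple {y | ∃ j, 1 ≤ j ∧ y = alt0 j}, memU_V⟩, ?_⟩
          rw [hTU]
          apply Subtype.coe_injective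
          rfl
        · obtain ⟨k, rfl⟩ : ∃ k, m = k + 1 := ⟨m - 1, by omega⟩
          refine ⟨Finsupp.single (k + 2) 1, ?_⟩
          rw [hρ, LinearMap.comp_apply, Finsupp.linearCombination_single, one_smul]
          rfl
        · obtain ⟨k, rfl⟩ : ∃ k, m = k + 1 := ⟨m - 1, by omega⟩
          refine ⟨Finsupp.single (k + 2) 1, ?_⟩
          rw [hρ, LinearMap.comp_apply, Finsupp.linearCombination_single, one_smul,
            Submodule.mkQ_apply, Submodule.mkQ_apply, Submodule.Quotient.eq]
          refine ⟨⟨ind Xtriple {alt0 (k + 1)}, memB_V (k + 1) (by omega)⟩, ?_⟩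
          rw [hTB (k + 1) (by omega)]
          apply Subtype.coe_injective
          rfl
      · intro hxW
        rw [show (⟨0, hxW⟩ : ↥Wspan) = 0 from rfl, map_zero]
        exact zero_mem _
      · intro a b ha hb iha ihb hxW
        rw [show (⟨a + b, hxW⟩ : ↥Wspan) = ⟨a, ha⟩ + ⟨b, hb⟩ from rfl, map_add]
        exact add_mem (iha ha) (ihb hb)
      · intro r a ha iha hxW
        rw [show (⟨r • a, hxW⟩ : ↥Wspan) = r • ⟨a, ha⟩ from rfl, map_smul]
        exact Submodule.smul_mem _ _ (iha ha)
    intro q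
    obtain ⟨g, rfl⟩ := Submodule.Quotient.mk_surjective _ q
    exact main g.1 g.2 g.2
  exact ⟨(LinearEquiv.ofBijective ρ ⟨hρinj, hρsurj⟩).symm⟩

end SubshiftPaper
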